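/- Let S be a subdivided star with infinitely many leaves, let D = 𝒟(S), and let D' be a strongly connected butterfly minor of D containing infinitely many teeth (leaves of S). Then D' contains a vertex that has infinite in-degree and infinite out-degree in D'. -/

import Mathlib

/-!
Common definitions: directed graphs as vertex/edge sets, directed paths and
walks, rays, arborescences, tree-like models and butterfly minors, laced
paths, knit rays, and the shapes (dominated directed rays, stars, combs,
chains of triangles) from the paper.
-/

universe u

/-- A directed graph on an ambient vertex type `V`, given by a set of vertices
and a set of directed edges (ordered pairs of vertices). -/
structure DGraph (V : Type u) where
  verts : Set V
  edges : Set (V × V)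

namespace DGraph

variable {V : Type u}

instance : Union (DGraph V) := ⟨fun G H => ⟨G.verts ∪ H.verts, G.edges ∪ H.edges⟩⟩
instance : Inter (DGraph V) := ⟨fun G H => ⟨G.verts ∩ H.verts, G.edges ∩ H.edges⟩⟩
instance : HasSubset (DGraph V) := ⟨fun H G => H.verts ⊆ G.verts ∧ H.edges ⊆ G.edges⟩
instance : EmptyCollection (DGraph V) := ⟨⟨∅, ∅⟩⟩

/-- The union of a family of directed graphs. -/
def iUnion {ι : Type} (f : ι → DGraph V) : DGraph V :=
  ⟨⋃ i, (f i).verts, ⋃ i, (f i).edges⟩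

/-- The directed graph obtained by reversing the orientation of every edge. -/
def reverse (G : DGraph V) : DGraph V := ⟨G.verts, {e | (e.2, e.1) ∈ G.edges}⟩

/-- The directed graph consisting of a single vertex and no edges. -/
def single (v : V) : DGraph V := ⟨{v}, ∅⟩

/-- Two vertices joined by both directed edges. -/
def linkBoth (a b : V) : DGraph V := ⟨{a, b}, {(a, b), (b, a)}⟩

/-- A directed triangle (directed cycle of length 3) on `a, b, c`. -/
def triangle (a b c : V) : DGraph V := ⟨{a, b, c}, {(a, b), (b, c), (c, a)}⟩

/-- The directed graph of a list of vertices with its consecutive edges. -/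
def ofList (l : List V) : DGraph V := ⟨{v | v ∈ l}, {e | e ∈ l.zip l.tail}⟩

/-- `𝒟(P)` for the (undirected) path `P` given by the list `l`:
the double path on `l`. -/
def doubleOfList (l : List V) : DGraph V := ofList l ∪ (ofList l).reverse

/-- The directed cycle through the vertices of `l` in order. -/
def cycleOfList (l : List V) : DGraph V :=
  ⟨{v | v ∈ l}, {e | e ∈ l.zip (l.tail ++ l.take 1)}⟩

/-- `G` is a directed cycle. -/
def IsDirectedCycle (G : DGraph V) : Prop :=
  ∃ l : List V, l.Nodup ∧ 2 ≤ l.length ∧ G = cycleOfList l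

/-- The out-oriented ray with vertices `f 0, f 1, …`, rooted at `f 0`. -/
def outRay (f : ℕ → V) : DGraph V :=
  ⟨Set.range f, {e | ∃ n, e = (f n, f (n + 1))}⟩

/-- The in-oriented ray with vertices `f 0, f 1, …`, rooted at `f 0`. -/
def inRay (f : ℕ → V) : DGraph V :=
  ⟨Set.range f, {e | ∃ n, e = (f (n + 1), f n)}⟩

/-- `𝒟(R)` for the undirected ray `R` with vertices `f 0, f 1, …`. -/
def doubleRay (f : ℕ → V) : DGraph V := outRay f ∪ inRay f

/-- The dominated directed ray on an out-oriented ray: the out-oriented ray `f`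
rooted at `f 0` together with the edges `(f (n+1), f 0)`. -/
def domOutRay (f : ℕ → V) : DGraph V :=
  ⟨Set.range f, {e | ∃ n, e = (f n, f (n + 1))} ∪ {e | ∃ n, e = (f (n + 1), f 0)}⟩

/-- The dominated directed ray on an in-oriented ray: the in-oriented ray `f`
rooted at `f 0` together with the edges `(f 0, f (n+1))`. -/
def domInRay (f : ℕ → V) : DGraph V :=
  ⟨Set.range f, {e | ∃ n, e = (f (n + 1), f n)} ∪ {e | ∃ n, e = (f 0, f (n + 1))}⟩

/-- `G` is a dominated directed ray. -/
def IsDominatedDirectedRay (G : DGraph V) : Prop :=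
  ∃ f : ℕ → V, Function.Injective f ∧ (G = domOutRay f ∨ G = domInRay f)

/-- The internal vertices of a path or walk given as a list. -/
def internals (l : List V) : List V := l.tail.dropLast

/-- `l` is a directed path in `G`. -/
def IsPath (G : DGraph V) (l : List V) : Prop :=
  l ≠ [] ∧ l.Nodup ∧ (∀ v ∈ l, v ∈ G.verts) ∧ ∀ e ∈ l.zip l.tail, e ∈ G.edges

/-- `l` is a directed path in `G` with startvertex `a` and endvertex `b`. -/
def IsPathFrom (G : DGraph V) (a b : V) (l : List V) : Prop :=
  IsPath G l ∧ l.head? = some a ∧ l.getLast? = some b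

/-- There is a directed `a`–`b` path in `G`. -/
def Reaches (G : DGraph V) (a b : V) : Prop := ∃ l, IsPathFrom G a b l

/-- `G` is strongly connected. -/
def StronglyConnected (G : DGraph V) : Prop :=
  ∀ a ∈ G.verts, ∀ b ∈ G.verts, Reaches G a b

/-- `l` is a directed `X`–`Y` path in `G`: it starts in `X`, ends in `Y` and
has no internal vertex in `X ∪ Y`. -/
def IsXYPath (G : DGraph V) (X Y : Set V) (l : List V) : Prop :=
  IsPath G l ∧ (∃ a ∈ X, l.head? = some a) ∧ (∃ b ∈ Y, l.getLast? = some b) ∧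
    ∀ v ∈ internals l, v ∉ X ∪ Y

/-- `T` is an in-arborescence rooted at `r`: its underlying graph is a tree
and all edges are directed towards the root `r`. -/
def IsInArborescence (T : DGraph V) (r : V) : Prop :=
  r ∈ T.verts ∧ (∀ e ∈ T.edges, e.1 ∈ T.verts ∧ e.2 ∈ T.verts) ∧
  (∀ w, (r, w) ∉ T.edges) ∧ (∀ v ∈ T.verts, v ≠ r → ∃! w, (v, w) ∈ T.edges) ∧
  (∀ v ∈ T.verts, Reaches T v r)

/-- `T` is an out-arborescence rooted at `r`. -/
def IsOutArborescence (T : DGraph V) (r : V) : Prop := IsInArborescence T.reverse r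

/-- `v` is a leaf of the in-arborescence `T` rooted at `r`. -/
def IsLeafOfInArb (T : DGraph V) (r v : V) : Prop :=
  v ∈ T.verts ∧ v ≠ r ∧ ∀ u, (u, v) ∉ T.edges

/-- `v` is a leaf of the out-arborescence `T` rooted at `r`. -/
def IsLeafOfOutArb (T : DGraph V) (r v : V) : Prop := IsLeafOfInArb T.reverse r v

/-- A tree-like model of `H` in `D`; every vertex of `H` is identified with the
common root of the in- and out-arborescence of its branch set. -/
structure TreeLikeModel (D H : DGraph V) where
  bag : V → DGraph V
  tin : V → DGraph V
  tout : V → DGraph V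
  emap : V × V → V × V
  bag_sub : ∀ v ∈ H.verts, bag v ⊆ D
  bag_disjoint : ∀ v ∈ H.verts, ∀ w ∈ H.verts, v ≠ w → (bag v).verts ∩ (bag w).verts = ∅
  bag_eq : ∀ v ∈ H.verts, bag v = tin v ∪ tout v
  tin_arb : ∀ v ∈ H.verts, IsInArborescence (tin v) v
  tout_arb : ∀ v ∈ H.verts, IsOutArborescence (tout v) v
  roots_eq : ∀ v ∈ H.verts, (tin v).verts ∩ (tout v).verts = {v}
  emap_mem : ∀ e ∈ H.edges, emap e ∈ D.edges
  emap_tail : ∀ e ∈ H.edges, (emap e).1 ∈ (tout e.1).verts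
  emap_head : ∀ e ∈ H.edges, (emap e).2 ∈ (tin e.2).verts

/-- `H` is a butterfly minor of `D`. -/
def IsButterflyMinor (D H : DGraph V) : Prop := Nonempty (TreeLikeModel D H)

/-- `G` is a double path (`𝒟(P)` for an undirected path `P`) with endpoints
`a` and `b`. -/
def IsDoublePath (G : DGraph V) (a b : V) : Prop :=
  ∃ l : List V, l.Nodup ∧ l.head? = some a ∧ l.getLast? = some b ∧ G = doubleOfList l

/-- `G = 𝒟(S)` for a subdivided star `S` with infinitely many leaves, with
centre `c` and branches `q n`; `teeth` is the set of leaves of `S`. -/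
def IsDSubdividedStar (G : DGraph V) (teeth : Set V) : Prop :=
  ∃ (c : V) (q : ℕ → List V),
    (∀ n, (q n).Nodup ∧ (q n).head? = some c ∧ 2 ≤ (q n).length) ∧
    (∀ m n, m ≠ n → ∀ v, v ∈ q m → v ∈ q n → v = c) ∧
    G = iUnion (fun n => doubleOfList (q n)) ∧
    teeth = {v | ∃ n, (q n).getLast? = some v}

/-- `G` is obtained from `𝒟(S)` for a subdivided star `S` by replacing the
centre of infinite degree by a dominated directed ray. -/
def IsRayCentreStar (G : DGraph V) (teeth : Set V) : Prop :=
  ∃ (f : ℕ → V) (R : DGraph V) (g : ℕ → V) (q : ℕ → List V),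
    Function.Injective f ∧ (R = domOutRay f ∨ R = domInRay f) ∧
    (∀ n, (q n).Nodup ∧ (q n).head? = some (g n)) ∧
    (∀ n, ∀ v ∈ q n, v ∉ Set.range f) ∧
    (∀ m n, m ≠ n → ∀ v ∈ q m, v ∉ q n) ∧
    G = R ∪ iUnion (fun n => doubleOfList (q n) ∪ linkBoth (f n) (g n)) ∧
    teeth = {v | ∃ n, (q n).getLast? = some v}

/-- `G` is shaped by a star, with set of teeth `teeth`. -/
def IsShapedByStar (G : DGraph V) (teeth : Set V) : Prop :=
  (IsDominatedDirectedRay G ∧ teeth = G.verts) ∨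
  IsDSubdividedStar G teeth ∨ IsRayCentreStar G teeth

/-- `G = 𝒟(C)` for a comb `C` with spine `f`, branches `q n` attached at
`f (α n)`; `teeth` is the set of teeth of `C`. -/
def IsDComb (G : DGraph V) (teeth : Set V) : Prop :=
  ∃ (f : ℕ → V) (α : ℕ → ℕ) (q : ℕ → List V),
    Function.Injective f ∧ Function.Injective α ∧
    (∀ n, (q n).Nodup ∧ (q n).head? = some (f (α n))) ∧
    (∀ n, ∀ v ∈ (q n).tail, v ∉ Set.range f) ∧
    (∀ m n, m ≠ n → ∀ v ∈ q m, v ∉ q n) ∧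
    G = doubleRay f ∪ iUnion (fun n => doubleOfList (q n)) ∧
    teeth = {v | ∃ n, (q n).getLast? = some v}

/-- The double path on `l` together with both edges between `b` and the first
vertex of `l` (empty if `l` is empty). -/
def branchGraph (b : V) (l : List V) : DGraph V :=
  match l with
  | [] => ∅
  | h :: _ => doubleOfList l ∪ linkBoth b h

/-- `G` is obtained from `𝒟(C)` for a comb `C` by replacing each junction of
`C` by a directed cycle of length 3 as described in the paper.  Position `k`
of the spine is replaced by the piece `S k` (a single vertex, or a directed
triangle at junctions), with `L k`, `R k`, `B k` the vertices of `S k` to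
which the left spine part, the right spine part and the branch attach, and
`t n` the tooth of branch `n`. -/
def IsTriangleComb (G : DGraph V) (teeth : Set V) : Prop :=
  ∃ (α : ℕ → ℕ) (q : ℕ → List V) (S : ℕ → DGraph V) (L R B : ℕ → V) (t : ℕ → V),
    Function.Injective α ∧
    (∀ j k, j ≠ k → (S j).verts ∩ (S k).verts = ∅) ∧
    (∀ n, (q n).Nodup) ∧
    (∀ m n, m ≠ n → ∀ v ∈ q m, v ∉ q n) ∧
    (∀ n, ∀ v ∈ q n, ∀ k, v ∉ (S k).verts) ∧
    (∀ k, L k ∈ (S k).verts ∧ R k ∈ (S k).verts ∧ B k ∈ (S k).verts) ∧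
    (∀ k, (¬ ∃ n, α n = k ∧ 1 ≤ k) → ∃ v, S k = single v) ∧
    (∀ n, 1 ≤ α n → ∃ a b c, a ≠ b ∧ b ≠ c ∧ a ≠ c ∧ S (α n) = triangle a b c) ∧
    (∀ n, 1 ≤ α n → q n ≠ [] →
      L (α n) ≠ R (α n) ∧ L (α n) ≠ B (α n) ∧ R (α n) ≠ B (α n)) ∧
    (∀ n, 1 ≤ α n → q n = [] →
      t n ∈ (S (α n)).verts ∧ L (α n) ≠ R (α n) ∧ t n ≠ L (α n) ∧ t n ≠ R (α n)) ∧
    (∀ n, q n ≠ [] → (q n).getLast? = some (t n)) ∧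
    (∀ n, α n = 0 → q n = [] → t n ∈ (S 0).verts) ∧
    G = iUnion S ∪ iUnion (fun k => linkBoth (R k) (L (k + 1))) ∪
        iUnion (fun n => branchGraph (B (α n)) (q n)) ∧
    teeth = Set.range t

/-- `G` is shaped by a comb, with set of teeth `teeth`. -/
def IsShapedByComb (G : DGraph V) (teeth : Set V) : Prop :=
  IsDComb G teeth ∨ IsTriangleComb G teeth

/-- The core of a chain of triangles: triangles `a i, b i, c i` together with
the edges `(a (i+1), a i)` and `(c i, c (i+1))`. -/
def chainCore (a b c : ℕ → V) : DGraph V :=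
  ⟨Set.range a ∪ Set.range b ∪ Set.range c,
   {e | ∃ i, e = (a i, b i) ∨ e = (b i, c i) ∨ e = (c i, a i) ∨
        e = (a (i + 1), a i) ∨ e = (c i, c (i + 1))}⟩

/-- `G` is a chain of triangles with set of teeth `teeth`. -/
def IsChainOfTriangles (G : DGraph V) (teeth : Set V) : Prop :=
  ∃ (a b c : ℕ → V) (q : ℕ → List V),
    (Function.Injective fun p : ℕ × Fin 3 => ![a, b, c] p.2 p.1) ∧
    (∀ i, (q i).Nodup ∧ (q i).head? = some (b i)) ∧
    (∀ i, ∀ v ∈ (q i).tail, ∀ j, v ≠ a j ∧ v ≠ b j ∧ v ≠ c j) ∧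
    (∀ i j, i ≠ j → ∀ v ∈ q i, v ∉ q j) ∧
    G = chainCore a b c ∪ iUnion (fun i => doubleOfList (q i)) ∧
    teeth = {v | ∃ i, (q i).getLast? = some v}

/-- `G` is a subdivided in-star with centre (root) `c` and all edges directed
towards `c`; it has infinitely many leaves and `teeth` is its set of leaves. -/
def IsSubdividedInStar (G : DGraph V) (teeth : Set V) : Prop :=
  ∃ (c : V) (q : ℕ → List V),
    (∀ n, (q n).Nodup ∧ (q n).getLast? = some c ∧ 2 ≤ (q n).length) ∧
    (∀ m n, m ≠ n → ∀ v, v ∈ q m → v ∈ q n → v = c) ∧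
    G = iUnion (fun n => ofList (q n)) ∧
    teeth = {v | ∃ n, (q n).head? = some v}

/-- `G` is a subdivided out-star. -/
def IsSubdividedOutStar (G : DGraph V) (teeth : Set V) : Prop :=
  IsSubdividedInStar G.reverse teeth

/-- `G = 𝒟(K_{1,∞})`. -/
def IsDInfiniteStar (G : DGraph V) : Prop :=
  ∃ (c : V) (g : ℕ → V), Function.Injective g ∧ (∀ n, g n ≠ c) ∧
    G = ⟨insert c (Set.range g), {e | ∃ n, e = (c, g n) ∨ e = (g n, c)}⟩

/-- `G = 𝒟(R)` for an undirected ray `R`. -/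
def IsDoubleRayGraph (G : DGraph V) : Prop :=
  ∃ f : ℕ → V, Function.Injective f ∧ G = doubleRay f

/-- `G` is a subdivision of a dominated directed ray (parallel edges being
collapsed): the ray `f`, its original vertices sitting at the positions
`α n ≥ 1`, and for each `n` a subdivided dominating edge `p n`. -/
def IsSubdivDominatedRay (G : DGraph V) : Prop :=
  (∃ (f : ℕ → V) (α : ℕ → ℕ) (p : ℕ → List V),
    Function.Injective f ∧ StrictMono α ∧ (∀ n, 1 ≤ α n) ∧
    (∀ n, (p n).Nodup ∧ (p n).head? = some (f (α n)) ∧ (p n).getLast? = some (f 0) ∧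
      2 ≤ (p n).length) ∧
    (∀ n, ∀ v ∈ internals (p n), v ∉ Set.range f) ∧
    (∀ m n, m ≠ n → ∀ v ∈ internals (p m), v ∉ p n) ∧
    G = outRay f ∪ iUnion (fun n => ofList (p n))) ∨
  (∃ (f : ℕ → V) (α : ℕ → ℕ) (p : ℕ → List V),
    Function.Injective f ∧ StrictMono α ∧ (∀ n, 1 ≤ α n) ∧
    (∀ n, (p n).Nodup ∧ (p n).head? = some (f 0) ∧ (p n).getLast? = some (f (α n)) ∧
      2 ≤ (p n).length) ∧
    (∀ n, ∀ v ∈ internals (p n), v ∉ Set.range f) ∧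
    (∀ m n, m ≠ n → ∀ v ∈ internals (p m), v ∉ p n) ∧
    G = inRay f ∪ iUnion (fun n => ofList (p n)))

section Laced

variable [DecidableEq V]

/-- The segment of the path `l` from `x` to `y` (inclusive). -/
def seg (l : List V) (x y : V) : List V :=
  (l.drop (l.idxOf x)).take (l.idxOf y + 1 - l.idxOf x)

/-- `x ≤ y` along the path `l`. -/
def leIn (l : List V) (x y : V) : Prop :=
  x ∈ l ∧ y ∈ l ∧ l.idxOf x ≤ l.idxOf y

/-- `x < y` along the path `l`. -/
def ltIn (l : List V) (x y : V) : Prop :=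
  x ∈ l ∧ y ∈ l ∧ l.idxOf x < l.idxOf y

/-- The directed paths `P` and `Q` are laced. -/
def Laced (P Q : List V) : Prop :=
  (∀ v ∈ P, v ∉ Q) ∨
  ∃ (ℓ : ℕ) (x y : ℕ → V), 1 ≤ ℓ ∧
    (∀ i, 1 ≤ i → i ≤ ℓ → leIn P (x i) (y i) ∧ leIn Q (x i) (y i)) ∧
    (∀ i, 1 ≤ i → i < ℓ → ltIn P (y i) (x (i + 1)) ∧ ltIn Q (y (i + 1)) (x i)) ∧
    (∀ i, 1 ≤ i → i ≤ ℓ → seg P (x i) (y i) = seg Q (x i) (y i)) ∧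
    (∀ i, 1 ≤ i → i < ℓ → ∀ v ∈ internals (seg Q (y (i + 1)) (x i)), v ∉ P) ∧
    (∀ v ∈ Q.take (Q.idxOf (x ℓ) + 1), v ∈ P → v = x ℓ) ∧
    (∀ v ∈ Q.drop (Q.idxOf (y 1)), v ∈ P → v = y 1)

end Laced

/-- The out-ray `f` and the in-ray `g` with common root are knit:
`x i = f (p i) = g (p' i)` and `y i = f (q i) = g (q' i)` are the shared
segments, in the orders required in the paper. -/
def Knit (f g : ℕ → V) : Prop :=
  f 0 = g 0 ∧
  ∃ p q p' q' : ℕ → ℕ,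
    (∀ i, 0 < p i ∧ p i ≤ q i ∧ q i < p (i + 1)) ∧
    (∀ i, 0 < q' i ∧ q' i ≤ p' i ∧ p' i < q' (i + 1)) ∧
    (∀ i, q i - p i = p' i - q' i) ∧
    (∀ i, ∀ k ≤ q i - p i, f (p i + k) = g (p' i - k)) ∧
    (∀ i, ∀ m, p' i < m → m < q' (i + 1) → g m ∉ Set.range f) ∧
    (∀ m, 0 < m → m < q' 0 → g m ∉ Set.range f)

section Contract

variable [DecidableEq V]

/-- The map identifying `v` with `u`. -/
def contractFun (u v : V) : V → V := fun x => if x = v then u else x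

/-- Contracting the edge `(u, v)` of `G` onto the vertex `u`. -/
def contractEdge (G : DGraph V) (u v : V) : DGraph V :=
  ⟨contractFun u v '' G.verts,
   {e | e ≠ (u, u) ∧ ∃ e' ∈ G.edges, e = (contractFun u v e'.1, contractFun u v e'.2)}⟩

end Contract

/-- The edge `(u, v)` of `G` is butterfly contractible. -/
def IsButterflyContractibleEdge (G : DGraph V) (u v : V) : Prop :=
  (u, v) ∈ G.edges ∧
  ((∀ w, (u, w) ∈ G.edges → w = v) ∨ (∀ w, (w, v) ∈ G.edges → w = u))

/-- `G` and `H` are isomorphic directed graphs. -/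
def Isom (G H : DGraph V) : Prop :=
  ∃ φ : V → V, Set.BijOn φ G.verts H.verts ∧
    ∀ u ∈ G.verts, ∀ v ∈ G.verts, ((u, v) ∈ G.edges ↔ (φ u, φ v) ∈ H.edges)

end DGraph


namespace DGraph

section StarAux

variable {V : Type u}

lemma union_verts' (G H : DGraph V) : (G ∪ H).verts = G.verts ∪ H.verts := rfl
lemma union_edges' (G H : DGraph V) : (G ∪ H).edges = G.edges ∪ H.edges := rfl

lemma zipTail_chain' {R : V → V → Prop} :
    ∀ l : List V, (∀ e ∈ l.zip l.tail, R e.1 e.2) ↔ l.Chain' R := by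
  intro l
  induction l with
  | nil => simp; exact List.isChain_nil
  | cons a t ih =>
    cases t with
    | nil => simp; exact List.isChain_singleton a
    | cons b t' =>
      have hz : (a :: b :: t').zip (a :: b :: t').tail
          = (a, b) :: ((b :: t').zip (b :: t').tail) := rfl
      rw [hz, show (a :: b :: t').Chain' R ↔ R a b ∧ (b :: t').Chain' R from List.isChain_cons_cons, ← ih]
      constructor
      · intro h
        exact ⟨h (a, b) (List.mem_cons_self), fun e he => h e (List.mem_cons_of_mem _ he)⟩
      · rintro ⟨h1, h2⟩ e he
        rcases List.mem_cons.mp he with rfl | he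
        · exact h1
        · exact h2 e he

lemma mem_of_head?_eq {l : List V} {a : V} (h : l.head? = some a) : a ∈ l :=
  List.mem_of_mem_head? (by simp [h])

lemma mem_of_getLast?_eq {l : List V} {a : V} (h : l.getLast? = some a) : a ∈ l :=
  List.mem_of_mem_getLast? (by simp [h])

lemma head?_cases {l : List V} {a : V} (h : l.head? = some a) : ∃ t, l = a :: t := by
  cases l with
  | nil => simp at h
  | cons x t => simp at h; exact ⟨t, by rw [h]⟩

lemma double_edge_mem {l : List V} {e : V × V} (h : e ∈ (doubleOfList l).edges) :
    e.1 ∈ l ∧ e.2 ∈ l := by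
  obtain ⟨x, y⟩ := e
  rcases h with h | h
  · have := List.of_mem_zip h
    exact ⟨this.1, List.mem_of_mem_tail this.2⟩
  · have := List.of_mem_zip (h : (y, x) ∈ l.zip l.tail)
    exact ⟨List.mem_of_mem_tail this.2, this.1⟩

lemma double_edge_symm {l : List V} {e : V × V} (h : e ∈ (doubleOfList l).edges) :
    (e.2, e.1) ∈ (doubleOfList l).edges := by
  obtain ⟨x, y⟩ := e
  rcases h with h | h
  · exact Or.inr h
  · exact Or.inl h

variable {q : ℕ → List V}

lemma starD_edge_mem {e : V × V}
    (h : e ∈ (iUnion fun n => doubleOfList (q n)).edges) :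
    ∃ n, e.1 ∈ q n ∧ e.2 ∈ q n := by
  obtain ⟨s, ⟨n, rfl⟩, hn⟩ := h
  exact ⟨n, double_edge_mem hn⟩

lemma starD_edge_symm {e : V × V}
    (h : e ∈ (iUnion fun n => doubleOfList (q n)).edges) :
    (e.2, e.1) ∈ (iUnion fun n => doubleOfList (q n)).edges := by
  obtain ⟨s, ⟨n, rfl⟩, hn⟩ := h
  exact ⟨_, ⟨n, rfl⟩, double_edge_symm hn⟩

lemma starD_verts {v : V} (h : v ∈ (iUnion fun n => doubleOfList (q n)).verts) :
    ∃ n, v ∈ q n := by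
  obtain ⟨s, ⟨n, rfl⟩, hn⟩ := h
  rcases hn with hn | hn
  · exact ⟨n, hn⟩
  · exact ⟨n, hn⟩

variable {c : V}

section WithCentre

variable (hqint : ∀ m n, m ≠ n → ∀ v, v ∈ q m → v ∈ q n → v = c)

include hqint

lemma branch_unique {x : V} {n m : ℕ} (hx : x ∈ q n) (hxc : x ≠ c) (hxm : x ∈ q m) :
    m = n := by
  by_contra h
  exact hxc (hqint m n h x hxm hx)

lemma edge_transfer {x y : V} {n : ℕ} (hx : x ∈ q n) (hxc : x ≠ c)
    (hxy : (x, y) ∈ (iUnion fun n => doubleOfList (q n)).edges) : y ∈ q n := by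
  obtain ⟨m, hxm, hym⟩ := starD_edge_mem hxy
  have := branch_unique hqint hx hxc hxm
  exact this ▸ hym

lemma chain_branch {n : ℕ} :
    ∀ l : List V, l.Chain' (fun a b => (a, b) ∈ (iUnion fun n => doubleOfList (q n)).edges) →
      (∀ v ∈ l, v ≠ c) → ∀ x ∈ l, x ∈ q n → ∀ y ∈ l, y ∈ q n := by
  intro l
  induction l with
  | nil => simp
  | cons a t ih =>
    intro hch hc x hx hxq y hy
    cases t with
    | nil =>
      have hxa : x = a := by simpa using hx
      have hya : y = a := by simpa using hy
      rw [hya, ← hxa]; exact hxq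
    | cons b t' =>
      have hab := (List.isChain_cons_cons.mp hch).1
      have hch' := (List.isChain_cons_cons.mp hch).2
      have hac : a ≠ c := hc a (List.mem_cons_self)
      have hbc : b ≠ c := hc b (List.mem_cons_of_mem _ (List.mem_cons_self))
      have hiff : a ∈ q n ↔ b ∈ q n :=
        ⟨fun h => edge_transfer hqint h hac hab,
         fun h => edge_transfer hqint h hbc (starD_edge_symm hab)⟩
      have hc' : ∀ v ∈ b :: t', v ≠ c := fun v hv => hc v (List.mem_cons_of_mem _ hv)
      rcases List.mem_cons.mp hx with rfl | hx'
      · rcases List.mem_cons.mp hy with rfl | hy'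
        · exact hxq
        · exact ih hch' hc' b (List.mem_cons_self) (hiff.mp hxq) y hy'
      · rcases List.mem_cons.mp hy with rfl | hy'
        · exact hiff.mpr (ih hch' hc' x hx' hxq b (List.mem_cons_self))
        · exact ih hch' hc' x hx' hxq y hy'

variable {D' : DGraph V} (M : TreeLikeModel (iUnion fun n => doubleOfList (q n)) D')

omit hqint in
lemma root_mem_bag {u : V} (hu : u ∈ D'.verts) : u ∈ (M.bag u).verts := by
  rw [M.bag_eq u hu]
  exact Or.inl (M.tin_arb u hu).1

lemma bag_in_branch {u : V} {n : ℕ} (hu : u ∈ D'.verts) (hun : u ∈ q n)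
    (hcb : c ∉ (M.bag u).verts) : ∀ v ∈ (M.bag u).verts, v ∈ q n := by
  have key : ∀ T : DGraph V, T.verts ⊆ (M.bag u).verts →
      T.edges ⊆ (iUnion fun n => doubleOfList (q n)).edges →
      ∀ v, Reaches T v u → v ∈ q n := by
    intro T hTv hTe v hr
    obtain ⟨l, ⟨⟨hne, hnd, hverts, hedges⟩, hhd, hlast⟩⟩ := hr
    have hchain : l.Chain' (fun a b => (a, b) ∈ (iUnion fun n => doubleOfList (q n)).edges) :=
      (zipTail_chain' l).mp fun e he => hTe (hedges e he)
    have hncl : ∀ w ∈ l, w ≠ c := fun w hw h => hcb (h ▸ hTv (hverts w hw))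
    exact chain_branch hqint l hchain hncl u (mem_of_getLast?_eq hlast) hun v
      (mem_of_head?_eq hhd)
  intro v hv
  have hv' : v ∈ (M.tin u).verts ∪ (M.tout u).verts := by
    have := M.bag_eq u hu ▸ hv
    exact this
  rcases hv' with hv' | hv'
  · refine key (M.tin u) ?_ ?_ v ((M.tin_arb u hu).2.2.2.2 v hv')
    · intro w hw
      rw [M.bag_eq u hu]; exact Or.inl hw
    · intro e he
      exact (M.bag_sub u hu).2 (by rw [M.bag_eq u hu]; exact Or.inl he)
  · refine key (M.tout u).reverse ?_ ?_ v ((M.tout_arb u hu).2.2.2.2 v hv')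
    · intro w hw
      rw [M.bag_eq u hu]; exact Or.inr hw
    · intro e he
      have : (e.2, e.1) ∈ (iUnion fun n => doubleOfList (q n)).edges :=
        (M.bag_sub u hu).2 (by rw [M.bag_eq u hu]; exact Or.inr he)
      exact starD_edge_symm this

lemma bags_meet {a b : V} {n : ℕ} (ha : a ∈ D'.verts) (hb : b ∈ D'.verts)
    (han : a ∈ q n) (hac : c ∉ (M.bag a).verts)
    (h : ∃ m x y, x ∈ (M.bag a).verts ∧ x ∈ q m ∧ y ∈ (M.bag b).verts ∧ y ∈ q m) :
    c ∈ (M.bag b).verts ∨ (b ∈ q n ∧ c ∉ (M.bag b).verts) := by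
  obtain ⟨m, x, y, hxa, hxm, hyb, hym⟩ := h
  have hxn : x ∈ q n := bag_in_branch hqint M ha han hac x hxa
  have hxc : x ≠ c := fun h => hac (h ▸ hxa)
  have hmn : m = n := branch_unique hqint hxn hxc hxm
  subst hmn
  by_cases hcbb : c ∈ (M.bag b).verts
  · exact Or.inl hcbb
  · refine Or.inr ⟨?_, hcbb⟩
    have hyc : y ≠ c := fun h => hcbb (h ▸ hyb)
    have hbD : b ∈ (iUnion fun n => doubleOfList (q n)).verts :=
      (M.bag_sub b hb).1 (root_mem_bag M hb)
    obtain ⟨nb, hbnb⟩ := starD_verts hbD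
    have hynb : y ∈ q nb := bag_in_branch hqint M hb hbnb hcbb y hyb
    have : nb = m := branch_unique hqint hym hyc hynb
    exact this ▸ hbnb

omit hqint in
lemma walk_lemma (E : V → V → Prop)
    (hE : ∀ a b n, a ∈ D'.verts → b ∈ D'.verts → E a b → a ∈ q n →
      c ∉ (M.bag a).verts →
      c ∈ (M.bag b).verts ∨ (b ∈ q n ∧ c ∉ (M.bag b).verts)) :
    ∀ (l : List V) (a : V) (n : ℕ), (∀ v ∈ a :: l, v ∈ D'.verts) →
      (a :: l).Chain' E → a ∈ q n → c ∉ (M.bag a).verts →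
      ∀ y, (a :: l).getLast? = some y →
      (y ∈ q n ∧ c ∉ (M.bag y).verts) ∨
        ∃ u b, u ∈ q n ∧ u ≠ c ∧ E u b ∧ b ∈ D'.verts ∧ c ∈ (M.bag b).verts := by
  intro l
  induction l with
  | nil =>
    intro a n hv hch han hac y hy
    left
    have hya : a = y := by simpa using hy
    subst hya
    exact ⟨han, hac⟩
  | cons b t ih =>
    intro a n hv hch han hac y hy
    have hab : E a b := (List.isChain_cons_cons.mp hch).1
    have ha' : a ∈ D'.verts := hv a (List.mem_cons_self)
    have hb' : b ∈ D'.verts := hv b (List.mem_cons_of_mem _ (List.mem_cons_self))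
    rcases hE a b n ha' hb' hab han hac with hcb | ⟨hbn, hbc⟩
    · exact Or.inr ⟨a, b, han, fun h => hac (h ▸ root_mem_bag M ha'), hab, hb', hcb⟩
    · exact ih b n (fun v hv' => hv v (List.mem_cons_of_mem _ hv'))
        (List.isChain_cons_cons.mp hch).2 hbn hbc y (by rw [← hy]; exact List.getLast?_cons_cons.symm)

end WithCentre

end StarAux

end DGraph

/-- Let `S` be a subdivided star with infinitely many
leaves, let `D = 𝒟(S)`, and let `D'` be a strongly connected butterfly minor
of `D` containing infinitely many teeth (leaves of `S`).  Then `D'` contains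
a vertex that has infinite in-degree and infinite out-degree in `D'`. -/
theorem star_minor_has_infinite_degree_vertex {V : Type u} (D D' : DGraph V)
    (teeth : Set V) (hD : DGraph.IsDSubdividedStar D teeth)
    (hm : D.IsButterflyMinor D') (hsc : D'.StronglyConnected)
    (hteeth : (D'.verts ∩ teeth).Infinite) :
    ∃ v ∈ D'.verts, {u | (u, v) ∈ D'.edges}.Infinite ∧
      {u | (v, u) ∈ D'.edges}.Infinite := by
  classical
  obtain ⟨c, q, hq, hqint, hDeq, hteethEq⟩ := hD
  subst hDeq
  obtain ⟨M⟩ := hm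
  -- basic tooth facts
  have tooth_ne_c : ∀ {n : ℕ} {t : V}, (q n).getLast? = some t → t ≠ c := by
    intro n t ht
    obtain ⟨hnd, hhd, hlen⟩ := hq n
    obtain ⟨xs, hxs⟩ := DGraph.head?_cases hhd
    rw [hxs] at ht hnd hlen
    cases xs with
    | nil => simp at hlen
    | cons x xs' =>
      rw [List.getLast?_cons_cons] at ht
      have htm : t ∈ x :: xs' := DGraph.mem_of_getLast?_eq ht
      have : c ∉ x :: xs' := (List.nodup_cons.mp hnd).1
      exact fun h => this (h ▸ htm)
  have tooth_mem : ∀ {n : ℕ} {t : V}, (q n).getLast? = some t → t ∈ q n := by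
    intro n t ht
    exact DGraph.mem_of_getLast?_eq ht
  -- edge-step hypotheses for the walk lemma, in both orientations
  have hEfwd : ∀ a b n, a ∈ D'.verts → b ∈ D'.verts → (a, b) ∈ D'.edges → a ∈ q n →
      c ∉ (M.bag a).verts →
      c ∈ (M.bag b).verts ∨ (b ∈ q n ∧ c ∉ (M.bag b).verts) := by
    intro a b n ha hb hab han hac
    have hmem := M.emap_mem (a, b) hab
    have htail := M.emap_tail (a, b) hab
    have hhead := M.emap_head (a, b) hab
    obtain ⟨m, h1, h2⟩ := DGraph.starD_edge_mem hmem
    refine DGraph.bags_meet hqint M ha hb han hac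
      ⟨m, (M.emap (a, b)).1, (M.emap (a, b)).2, ?_, h1, ?_, h2⟩
    · rw [M.bag_eq a ha]; exact Or.inr htail
    · rw [M.bag_eq b hb]; exact Or.inl hhead
  have hEbwd : ∀ a b n, a ∈ D'.verts → b ∈ D'.verts → (b, a) ∈ D'.edges → a ∈ q n →
      c ∉ (M.bag a).verts →
      c ∈ (M.bag b).verts ∨ (b ∈ q n ∧ c ∉ (M.bag b).verts) := by
    intro a b n ha hb hba han hac
    have hmem := M.emap_mem (b, a) hba
    have htail := M.emap_tail (b, a) hba
    have hhead := M.emap_head (b, a) hba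
    obtain ⟨m, h1, h2⟩ := DGraph.starD_edge_mem hmem
    refine DGraph.bags_meet hqint M ha hb han hac
      ⟨m, (M.emap (b, a)).2, (M.emap (b, a)).1, ?_, h2, ?_, h1⟩
    · rw [M.bag_eq a ha]; exact Or.inl hhead
    · rw [M.bag_eq b hb]; exact Or.inr htail
  -- existence of the centre vertex v₀ of D'
  have hv0 : ∃ v₀ ∈ D'.verts, c ∈ (M.bag v₀).verts := by
    obtain ⟨t1, ht1, t2, ht2, h12⟩ := hteeth.nontrivial
    obtain ⟨n1, hn1⟩ : ∃ n, (q n).getLast? = some t1 := by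
      have := ht1.2; rw [hteethEq] at this; exact this
    obtain ⟨n2, hn2⟩ : ∃ n, (q n).getLast? = some t2 := by
      have := ht2.2; rw [hteethEq] at this; exact this
    by_cases hct1 : c ∈ (M.bag t1).verts
    · exact ⟨t1, ht1.1, hct1⟩
    obtain ⟨l, ⟨⟨hne, hnd, hverts, hedges⟩, hhd, hlast⟩⟩ := hsc t1 ht1.1 t2 ht2.1
    obtain ⟨rest, hrest⟩ := DGraph.head?_cases hhd
    subst hrest
    have hchain : (t1 :: rest).Chain' (fun a b => (a, b) ∈ D'.edges) :=
      (DGraph.zipTail_chain' _).mp hedges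
    rcases DGraph.walk_lemma M _ hEfwd rest t1 n1 hverts hchain
        (tooth_mem hn1) hct1 t2 hlast with ⟨ht2n1, _⟩ | ⟨u, b, _, _, _, hbv, hcb⟩
    · exfalso
      have hn21 : n2 = n1 :=
        DGraph.branch_unique hqint ht2n1 (tooth_ne_c hn2) (tooth_mem hn2)
      rw [hn21] at hn2
      exact h12 (Option.some_injective _ (hn1.symm.trans hn2))
    · exact ⟨b, hbv, hcb⟩
  obtain ⟨v₀, hv₀v, hv₀c⟩ := hv0
  have huniq : ∀ b ∈ D'.verts, c ∈ (M.bag b).verts → b = v₀ := by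
    intro b hb hcb
    by_contra hne
    have h := M.bag_disjoint b hb v₀ hv₀v hne
    have : c ∈ (M.bag b).verts ∩ (M.bag v₀).verts := ⟨hcb, hv₀c⟩
    rw [h] at this
    exact this
  -- the infinite set of teeth distinct from v₀
  set S : Set V := (D'.verts ∩ teeth) \ {v₀} with hSdef
  have hS : S.Infinite := hteeth.diff (Set.finite_singleton v₀)
  have hSfacts : ∀ t ∈ S, t ∈ D'.verts ∧ c ∉ (M.bag t).verts ∧
      ∃ n, (q n).getLast? = some t := by
    intro t ht
    refine ⟨ht.1.1, fun h => ht.2 (huniq t ht.1.1 h), ?_⟩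
    have := ht.1.2; rw [hteethEq] at this; exact this
  -- in-neighbours
  have hin : ∀ t : V, ∃ u : V, t ∈ S →
      (u, v₀) ∈ D'.edges ∧ u ≠ c ∧ ∃ n, (q n).getLast? = some t ∧ u ∈ q n := by
    intro t
    by_cases ht : t ∈ S
    · obtain ⟨htv, htc, n, hn⟩ := hSfacts t ht
      obtain ⟨l, ⟨⟨hne, hnd, hverts, hedges⟩, hhd, hlast⟩⟩ := hsc t htv v₀ hv₀v
      obtain ⟨rest, hrest⟩ := DGraph.head?_cases hhd
      subst hrest
      have hchain : (t :: rest).Chain' (fun a b => (a, b) ∈ D'.edges) :=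
        (DGraph.zipTail_chain' _).mp hedges
      rcases DGraph.walk_lemma M _ hEfwd rest t n hverts hchain
          (tooth_mem hn) htc v₀ hlast with ⟨_, hcv⟩ | ⟨u, b, hun, huc, hub, hbv, hcb⟩
      · exact absurd hv₀c hcv
      · have : b = v₀ := huniq b hbv hcb
        exact ⟨u, fun _ => ⟨this ▸ hub, huc, n, hn, hun⟩⟩
    · exact ⟨c, fun h => absurd h ht⟩
  -- out-neighbours
  have hout : ∀ t : V, ∃ u : V, t ∈ S →
      (v₀, u) ∈ D'.edges ∧ u ≠ c ∧ ∃ n, (q n).getLast? = some t ∧ u ∈ q n := by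
    intro t
    by_cases ht : t ∈ S
    · obtain ⟨htv, htc, n, hn⟩ := hSfacts t ht
      obtain ⟨l, ⟨⟨hne, hnd, hverts, hedges⟩, hhd, hlast⟩⟩ := hsc v₀ hv₀v t htv
      have hchain : l.Chain' (fun a b => (a, b) ∈ D'.edges) :=
        (DGraph.zipTail_chain' _).mp hedges
      have hchainr : l.reverse.Chain' (fun a b => (b, a) ∈ D'.edges) :=
        List.isChain_reverse.mpr hchain
      have hhdr : l.reverse.head? = some t := by rw [List.head?_reverse]; exact hlast
      have hlastr : l.reverse.getLast? = some v₀ := by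
        rw [List.getLast?_reverse]; exact hhd
      obtain ⟨rest, hrest⟩ := DGraph.head?_cases hhdr
      rw [hrest] at hchainr hlastr
      have hvertsr : ∀ v ∈ t :: rest, v ∈ D'.verts := by
        intro v hv
        apply hverts
        rw [← List.mem_reverse, hrest]
        exact hv
      rcases DGraph.walk_lemma M _ hEbwd rest t n hvertsr hchainr
          (tooth_mem hn) htc v₀ hlastr with ⟨_, hcv⟩ | ⟨u, b, hun, huc, hub, hbv, hcb⟩
      · exact absurd hv₀c hcv
      · have : b = v₀ := huniq b hbv hcb
        exact ⟨u, fun _ => ⟨this ▸ hub, huc, n, hn, hun⟩⟩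
    · exact ⟨c, fun h => absurd h ht⟩
  choose F hF using hin
  choose G hG using hout
  -- injectivity of the neighbour maps on S
  have hinjF : Set.InjOn F S := by
    intro t ht t' ht' heq
    obtain ⟨_, hc1, n, hn, hun⟩ := hF t ht
    obtain ⟨_, _, n', hn', hun'⟩ := hF t' ht'
    by_contra hne
    have hnn' : n = n' := by
      by_contra h
      exact hc1 (hqint n n' h (F t) hun (heq ▸ hun'))
    rw [hnn'] at hn
    exact hne (Option.some_injective _ (hn.symm.trans hn'))
  have hinjG : Set.InjOn G S := by
    intro t ht t' ht' heq
    obtain ⟨_, hc1, n, hn, hun⟩ := hG t ht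
    obtain ⟨_, _, n', hn', hun'⟩ := hG t' ht'
    by_contra hne
    have hnn' : n = n' := by
      by_contra h
      exact hc1 (hqint n n' h (G t) hun (heq ▸ hun'))
    rw [hnn'] at hn
    exact hne (Option.some_injective _ (hn.symm.trans hn'))
  refine ⟨v₀, hv₀v, ?_, ?_⟩
  · refine ((Set.infinite_image_iff hinjF).mpr hS).mono ?_
    rintro _ ⟨t, ht, rfl⟩
    exact (hF t ht).1
  · refine ((Set.infinite_image_iff hinjG).mpr hS).mono ?_
    rintro _ ⟨t, ht, rfl⟩
    exact (hG t ht).1
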